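/- Let N be a finite set, p : N → ℝ with p_u ≥ 0 and Σ_{u∈N} p_u ≤ 1, and q : N → [0,1]. Let H > 0 and λ ∈ (0,1) satisfy Σ_{u∈N} p_u G(q_u) ≤ (1-λ)·H. Let 0 = v_0 ≤ … ≤ v_w = 1 be a (δ,η)-net with δ = λH/6 and η = λ/3, and partition N into groups by assigning each u ∈ N to exactly one interval I_k = [v_{k-1}, v_k] containing q_u. For each group J ⊆ N with p_J = Σ_{u∈J} p_u > 0 set q_J = (Σ_{u∈J} p_u q_u)/p_J. Then Σ_{J: p_J > 0} p_J · G(q_J) ≤ (1 - λ/2)·H. -/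
import Mathlib


/-- The pseudo-entropy function `G(q) = 2√(q(1-q))`. -/
noncomputable def G (q : ℝ) : ℝ := 2 * Real.sqrt (q * (1 - q))

lemma G_nonneg (x : ℝ) : 0 ≤ G x := by
  unfold G; positivity

/-- merge lemma: let `p : N → ℝ` be nonnegative weights with total mass `≤ 1`,
`q : N → [0,1]`, and suppose `Σ_u p_u G(q_u) ≤ (1-λ)·H` for some `H > 0`, `λ ∈ (0,1)`.
Given a `(δ,η)`-net `0 = v_0 ≤ … ≤ v_w = 1` with `δ = λH/6` and `η = λ/3`, and an assignment
`κ` of each `u ∈ N` to an interval `[v_{κ u}, v_{κ u + 1}]` containing `q_u`, the merged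
groups `J_k = κ⁻¹(k)` with masses `pJ_k` and averages `qJ_k` satisfy
`Σ_{k : pJ_k > 0} pJ_k · G(qJ_k) ≤ (1 - λ/2)·H`. -/
theorem stmt10 {N : Type*} [Fintype N]
    (p : N → ℝ) (hp : ∀ u, 0 ≤ p u) (hpsum : ∑ u, p u ≤ 1)
    (q : N → ℝ) (hq : ∀ u, q u ∈ Set.Icc (0 : ℝ) 1)
    (H lam : ℝ) (hH : 0 < H) (hlam : lam ∈ Set.Ioo (0 : ℝ) 1)
    (hent : ∑ u, p u * G (q u) ≤ (1 - lam) * H)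
    (δ η : ℝ) (hδ : δ = lam * H / 6) (hη : η = lam / 3)
    (w : ℕ) (v : ℕ → ℝ) (hv0 : v 0 = 0) (hvw : v w = 1)
    (hmono : ∀ k < w, v k ≤ v (k + 1))
    (hnet : ∀ k < w, ∀ x ∈ Set.Icc (v k) (v (k + 1)), ∀ y ∈ Set.Icc (v k) (v (k + 1)),
      G y ≤ max δ ((1 + η) * G x))
    (κ : N → ℕ) (hκ : ∀ u, κ u < w ∧ q u ∈ Set.Icc (v (κ u)) (v (κ u + 1)))
    (pJ qJ : ℕ → ℝ)
    (hpJ : ∀ k, pJ k = ∑ u ∈ Finset.univ.filter (fun u => κ u = k), p u)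
    (hqJ : ∀ k, qJ k = (∑ u ∈ Finset.univ.filter (fun u => κ u = k), p u * q u) / pJ k) :
    ∑ k ∈ (Finset.range w).filter (fun k => 0 < pJ k), pJ k * G (qJ k) ≤
      (1 - lam / 2) * H := by
  obtain ⟨hlam0, hlam1⟩ := hlam
  have hδ0 : 0 ≤ δ := by rw [hδ]; positivity
  have hη0 : 0 ≤ η := by rw [hη]; positivity
  have hterm : ∀ u : N, 0 ≤ p u * (δ + (1 + η) * G (q u)) := by
    intro u
    have := G_nonneg (q u)
    have := hp u
    positivity
  -- per-group bound
  have key : ∀ k ∈ (Finset.range w).filter (fun k => 0 < pJ k),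
      pJ k * G (qJ k) ≤
        ∑ u ∈ Finset.univ.filter (fun u => κ u = k), p u * (δ + (1 + η) * G (q u)) := by
    intro k hk
    simp only [Finset.mem_filter, Finset.mem_range] at hk
    obtain ⟨hkw, hpk⟩ := hk
    -- qJ k lies in the interval
    have hmem : qJ k ∈ Set.Icc (v k) (v (k + 1)) := by
      rw [hqJ, hpJ]
      constructor
      · rw [le_div_iff₀ (by rw [hpJ] at hpk; exact hpk)]
        rw [Finset.mul_sum]
        apply Finset.sum_le_sum
        intro u hu
        simp only [Finset.mem_filter] at hu
        have h2 := (hκ u).2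
        rw [← hu.2] at *
        calc v (κ u) * p u = p u * v (κ u) := by ring
          _ ≤ p u * q u := mul_le_mul_of_nonneg_left h2.1 (hp u)
      · rw [div_le_iff₀ (by rw [hpJ] at hpk; exact hpk)]
        rw [Finset.mul_sum]
        apply Finset.sum_le_sum
        intro u hu
        simp only [Finset.mem_filter] at hu
        have h2 := (hκ u).2
        rw [← hu.2] at *
        calc p u * q u ≤ p u * v (κ u + 1) := mul_le_mul_of_nonneg_left h2.2 (hp u)
          _ = v (κ u + 1) * p u := by ring
    calc pJ k * G (qJ k)
        = ∑ u ∈ Finset.univ.filter (fun u => κ u = k), p u * G (qJ k) := by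
          rw [hpJ, Finset.sum_mul]
      _ ≤ ∑ u ∈ Finset.univ.filter (fun u => κ u = k), p u * (δ + (1 + η) * G (q u)) := by
          apply Finset.sum_le_sum
          intro u hu
          simp only [Finset.mem_filter] at hu
          have hqu : q u ∈ Set.Icc (v k) (v (k + 1)) := by rw [← hu.2]; exact (hκ u).2
          have hb := hnet k hkw (q u) hqu (qJ k) hmem
          have hmax : max δ ((1 + η) * G (q u)) ≤ δ + (1 + η) * G (q u) := by
            apply max_le
            · have := G_nonneg (q u); nlinarith
            · linarith
          exact mul_le_mul_of_nonneg_left (hb.trans hmax) (hp u)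
  have step1 : ∑ k ∈ (Finset.range w).filter (fun k => 0 < pJ k), pJ k * G (qJ k) ≤
      ∑ k ∈ (Finset.range w).filter (fun k => 0 < pJ k),
        ∑ u ∈ Finset.univ.filter (fun u => κ u = k), p u * (δ + (1 + η) * G (q u)) :=
    Finset.sum_le_sum key
  have step2 : ∑ k ∈ (Finset.range w).filter (fun k => 0 < pJ k),
      ∑ u ∈ Finset.univ.filter (fun u => κ u = k), p u * (δ + (1 + η) * G (q u)) ≤
      ∑ k ∈ Finset.range w,
        ∑ u ∈ Finset.univ.filter (fun u => κ u = k), p u * (δ + (1 + η) * G (q u)) := by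
    apply Finset.sum_le_sum_of_subset_of_nonneg (Finset.filter_subset _ _)
    intro k _ _
    exact Finset.sum_nonneg fun u _ => hterm u
  have step3 : ∑ k ∈ Finset.range w,
      ∑ u ∈ Finset.univ.filter (fun u => κ u = k), p u * (δ + (1 + η) * G (q u)) =
      ∑ u, p u * (δ + (1 + η) * G (q u)) := by
    exact Finset.sum_fiberwise_of_maps_to (fun u _ => Finset.mem_range.mpr (hκ u).1) _
  have step4 : ∑ u, p u * (δ + (1 + η) * G (q u)) ≤ δ + (1 + η) * ((1 - lam) * H) := by
    have h1 : ∑ u, p u * (δ + (1 + η) * G (q u)) =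
        (∑ u, p u) * δ + (1 + η) * ∑ u, p u * G (q u) := by
      rw [Finset.sum_mul, Finset.mul_sum]
      rw [← Finset.sum_add_distrib]
      congr 1; ext u; ring
    rw [h1]
    have h2 : (∑ u, p u) * δ ≤ δ := by
      have := mul_le_mul_of_nonneg_right hpsum hδ0
      linarith
    have h3 : (1 + η) * ∑ u, p u * G (q u) ≤ (1 + η) * ((1 - lam) * H) :=
      mul_le_mul_of_nonneg_left hent (by linarith)
    linarith
  have final : δ + (1 + η) * ((1 - lam) * H) ≤ (1 - lam / 2) * H := by
    rw [hδ, hη]; nlinarith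
  linarith
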